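/- If G is a claw-induced-saturated graph in which every vertex in the closed neighborhood of some vertex v has degree exactly 4, then the subgraph of G induced by N(v) is isomorphic to either 2K_2 or P_4. -/
import Mathlib


open SimpleGraph

/-- `G` contains an induced copy of `H`. -/
def HasInducedCopy {W V : Type*} (H : SimpleGraph W) (G : SimpleGraph V) : Prop :=
  Nonempty (H ↪g G)

/-- `G` is `H`-induced-saturated: `G` has no induced copy of `H`, but deleting any edge
or adding any non-edge creates an induced copy of `H`. -/
def IsIndSat {V W : Type*} (G : SimpleGraph V) (H : SimpleGraph W) : Prop :=
  ¬ HasInducedCopy H G ∧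
  (∀ u v : V, G.Adj u v → HasInducedCopy H (G.deleteEdges {s(u, v)})) ∧
  (∀ u v : V, u ≠ v → ¬ G.Adj u v →
    HasInducedCopy H (G ⊔ SimpleGraph.fromEdgeSet {s(u, v)}))

/-- The claw `K_{1,3}`: star with center `0` and leaves `1, 2, 3`. -/
def claw : SimpleGraph (Fin 4) :=
  SimpleGraph.fromRel (fun i _ => i = 0)

/-- `2K₂`: two disjoint edges. -/
def twoK2 : SimpleGraph (Fin 2 × Fin 2) :=
  SimpleGraph.fromRel (fun x y => x.1 = y.1)

/-- The path `P₄` on four vertices `0 - 1 - 2 - 3`. -/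
def path4 : SimpleGraph (Fin 4) :=
  SimpleGraph.fromRel (fun i j => (j : ℕ) = (i : ℕ) + 1)

set_option linter.all false

lemma classifyB (ab ac ad bc bd cd : Bool)
    (h : ((ab || ac || bc) && (ab || ad || bd) && (ac || ad || cd) && (bc || bd || cd) &&
      (!ab || !ac || !ad) && (!ab || !bc || !bd) && (!ac || !bc || !cd) && (!ad || !bd || !cd) &&
      (ab || ac || ad) && (ab || bc || bd) && (ac || bc || cd) && (ad || bd || cd) &&
      (!ab || !bc || !cd || !ad || ac || bd) && (!ab || !bd || !cd || !ac || ad || bc) &&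
      (!ac || !bc || !bd || !ad || ab || cd)) = true) :
    ((ab && cd && !ac && !ad && !bc && !bd) ||
     (ac && bd && !ab && !ad && !bc && !cd) ||
     (ad && bc && !ab && !ac && !bd && !cd) ||
     (ac && ab && bd && !bc && !cd && !ad) ||
     (ad && ab && bc && !bd && !cd && !ac) ||
     (ab && ac && cd && !bc && !bd && !ad) ||
     (ad && ac && bc && !ab && !bd && !cd) ||
     (ab && ad && cd && !ac && !bc && !bd) ||
     (ac && ad && bd && !ab && !bc && !cd) ||
     (ab && bc && cd && !ac && !ad && !bd) ||
     (bd && bc && ac && !ab && !ad && !cd) ||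
     (ab && bd && cd && !ac && !ad && !bc) ||
     (bc && bd && ad && !ab && !ac && !cd) ||
     (ac && cd && bd && !ab && !ad && !bc) ||
     (bc && cd && ad && !ab && !ac && !bd)) = true := by
  revert ab ac ad bc bd cd
  decide


section Helpers
variable {V : Type*} {G : SimpleGraph V}

lemma noclaw (h : ¬ HasInducedCopy claw G)
    {x a b c : V} (hab : a ≠ b) (hac : a ≠ c) (hbc : b ≠ c)
    (hxa : G.Adj x a) (hxb : G.Adj x b) (hxc : G.Adj x c)
    (nab : ¬ G.Adj a b) (nac : ¬ G.Adj a c) (nbc : ¬ G.Adj b c) : False := by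
  apply h
  have nba : ¬ G.Adj b a := fun h' => nab h'.symm
  have nca : ¬ G.Adj c a := fun h' => nac h'.symm
  have ncb : ¬ G.Adj c b := fun h' => nbc h'.symm
  have hax : G.Adj a x := hxa.symm
  have hbx : G.Adj b x := hxb.symm
  have hcx : G.Adj c x := hxc.symm
  refine ⟨⟨⟨![x,a,b,c], ?_⟩, ?_⟩⟩
  · intro i j hij
    fin_cases i <;> fin_cases j <;>
      simp_all [hxa.ne, hxb.ne, hxc.ne, hxa.ne', hxb.ne', hxc.ne']
  · intro i j
    fin_cases i <;> fin_cases j <;>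
      simp [claw, SimpleGraph.fromRel_adj] <;> assumption

private lemma sne {a b c d : V} (h1 : a ≠ c) (h2 : a ≠ d) (h3 : b ≠ c) (h4 : b ≠ d) :
    s(a, b) ≠ s(c, d) := by
  intro he
  rcases Sym2.eq_iff.mp he with ⟨rfl, rfl⟩ | ⟨rfl, rfl⟩ <;> simp_all

private lemma del_helper {x p q r u v : V}
    (axq : G.Adj x q) (axr : G.Adj x r) (axp : G.Adj x p)
    (npq : ¬ G.Adj p q) (npr : ¬ G.Adj p r) (hpq : p ≠ q) (hpr : p ≠ r)
    (heq : s(q, r) = s(u, v)) :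
    ∃ x w, G.Adj x u ∧ G.Adj x v ∧ G.Adj x w ∧ ¬ G.Adj w u ∧ ¬ G.Adj w v ∧ w ≠ u ∧ w ≠ v := by
  rcases Sym2.eq_iff.mp heq with ⟨rfl, rfl⟩ | ⟨rfl, rfl⟩
  · exact ⟨x, p, axq, axr, axp, npq, npr, hpq, hpr⟩
  · exact ⟨x, p, axr, axq, axp, npr, npq, hpr, hpq⟩

lemma edge_del (hfree : ¬ HasInducedCopy claw G) {u v : V}
    (hcopy : HasInducedCopy claw (G.deleteEdges {s(u, v)})) :
    ∃ x w, G.Adj x u ∧ G.Adj x v ∧ G.Adj x w ∧ ¬ G.Adj w u ∧ ¬ G.Adj w v ∧ w ≠ u ∧ w ≠ v := by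
  obtain ⟨f⟩ := hcopy
  set G' := G.deleteEdges {s(u, v)} with hG'
  have hadj : ∀ p q : V, G'.Adj p q ↔ G.Adj p q ∧ s(p, q) ≠ s(u, v) := by
    intro p q; rw [hG', SimpleGraph.deleteEdges_adj]; simp
  have h01 : G'.Adj (f 0) (f 1) := f.map_rel_iff.mpr (by simp [claw, SimpleGraph.fromRel_adj])
  have h02 : G'.Adj (f 0) (f 2) := f.map_rel_iff.mpr (by simp [claw, SimpleGraph.fromRel_adj])
  have h03 : G'.Adj (f 0) (f 3) := f.map_rel_iff.mpr (by simp [claw, SimpleGraph.fromRel_adj])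
  have n12 : ¬ G'.Adj (f 1) (f 2) := fun hh => by
    have := f.map_rel_iff.mp hh; simp [claw, SimpleGraph.fromRel_adj] at this
  have n13 : ¬ G'.Adj (f 1) (f 3) := fun hh => by
    have := f.map_rel_iff.mp hh; simp [claw, SimpleGraph.fromRel_adj] at this
  have n23 : ¬ G'.Adj (f 2) (f 3) := fun hh => by
    have := f.map_rel_iff.mp hh; simp [claw, SimpleGraph.fromRel_adj] at this
  have hinj := f.injective
  have d12 : f 1 ≠ f 2 := fun e => by have := hinj e; simp at this
  have d13 : f 1 ≠ f 3 := fun e => by have := hinj e; simp at this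
  have d23 : f 2 ≠ f 3 := fun e => by have := hinj e; simp at this
  have a01 : G.Adj (f 0) (f 1) := ((hadj _ _).mp h01).1
  have a02 : G.Adj (f 0) (f 2) := ((hadj _ _).mp h02).1
  have a03 : G.Adj (f 0) (f 3) := ((hadj _ _).mp h03).1
  have key : ∀ p q : V, ¬ G'.Adj p q → s(p, q) ≠ s(u, v) → ¬ G.Adj p q := by
    intro p q hn hne ha; exact hn ((hadj _ _).mpr ⟨ha, hne⟩)
  by_cases k12 : s(f 1, f 2) = s(u, v)
  · have e1 : s(f 1, f 3) ≠ s(u, v) := fun he => by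
      rcases Sym2.eq_iff.mp (he.trans k12.symm) with ⟨h1, h2⟩ | ⟨h1, h2⟩
      exacts [d23 h2.symm, d12 h1]
    have e2 : s(f 2, f 3) ≠ s(u, v) := fun he => by
      rcases Sym2.eq_iff.mp (he.trans k12.symm) with ⟨h1, h2⟩ | ⟨h1, h2⟩
      exacts [d12 h1.symm, d13 h2.symm]
    have npq : ¬ G.Adj (f 3) (f 1) := fun hh => key _ _ n13 e1 hh.symm
    have npr : ¬ G.Adj (f 3) (f 2) := fun hh => key _ _ n23 e2 hh.symm
    exact del_helper a01 a02 a03 npq npr d13.symm d23.symm k12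
  · by_cases k13 : s(f 1, f 3) = s(u, v)
    · have e1 : s(f 1, f 2) ≠ s(u, v) := fun he => by
        rcases Sym2.eq_iff.mp (he.trans k13.symm) with ⟨h1, h2⟩ | ⟨h1, h2⟩
        exacts [d23 h2, d13 h1]
      have e2 : s(f 2, f 3) ≠ s(u, v) := fun he => by
        rcases Sym2.eq_iff.mp (he.trans k13.symm) with ⟨h1, h2⟩ | ⟨h1, h2⟩
        exacts [d12 h1.symm, d23 h1]
      have npq : ¬ G.Adj (f 2) (f 1) := fun hh => key _ _ n12 e1 hh.symm
      have npr : ¬ G.Adj (f 2) (f 3) := key _ _ n23 e2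
      exact del_helper a01 a03 a02 npq npr d12.symm d23 k13
    · by_cases k23 : s(f 2, f 3) = s(u, v)
      · have e1 : s(f 1, f 2) ≠ s(u, v) := fun he => by
          rcases Sym2.eq_iff.mp (he.trans k23.symm) with ⟨h1, h2⟩ | ⟨h1, h2⟩
          exacts [d12 h1, d13 h1]
        have e2 : s(f 1, f 3) ≠ s(u, v) := fun he => by
          rcases Sym2.eq_iff.mp (he.trans k23.symm) with ⟨h1, h2⟩ | ⟨h1, h2⟩
          exacts [d12 h1, d13 h1]
        have npq : ¬ G.Adj (f 1) (f 2) := key _ _ n12 e1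
        have npr : ¬ G.Adj (f 1) (f 3) := key _ _ n13 e2
        exact del_helper a02 a03 a01 npq npr d12 d13 k23
      · exact absurd (noclaw hfree d12 d13 d23 a01 a02 a03
          (key _ _ n12 k12) (key _ _ n13 k13) (key _ _ n23 k23)) id

private lemma add_helper {x r p q u v : V}
    (axp : G.Adj x p) (axq : G.Adj x q)
    (npq : ¬ G.Adj p q) (nrp : ¬ G.Adj r p) (nrq : ¬ G.Adj r q)
    (dpq : p ≠ q) (dpr : p ≠ r) (dqr : q ≠ r) (heq : s(x, r) = s(u, v)) :
    (∃ p q, G.Adj u p ∧ G.Adj u q ∧ ¬ G.Adj p q ∧ ¬ G.Adj v p ∧ ¬ G.Adj v q ∧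
      p ≠ q ∧ p ≠ v ∧ q ≠ v) ∨
    (∃ p q, G.Adj v p ∧ G.Adj v q ∧ ¬ G.Adj p q ∧ ¬ G.Adj u p ∧ ¬ G.Adj u q ∧
      p ≠ q ∧ p ≠ u ∧ q ≠ u) := by
  rcases Sym2.eq_iff.mp heq with ⟨rfl, rfl⟩ | ⟨rfl, rfl⟩
  · exact Or.inl ⟨p, q, axp, axq, npq, nrp, nrq, dpq, dpr, dqr⟩
  · exact Or.inr ⟨p, q, axp, axq, npq, nrp, nrq, dpq, dpr, dqr⟩

lemma edge_add (hfree : ¬ HasInducedCopy claw G) {u v : V} (huv : u ≠ v)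
    (hcopy : HasInducedCopy claw (G ⊔ SimpleGraph.fromEdgeSet {s(u, v)})) :
    (∃ p q, G.Adj u p ∧ G.Adj u q ∧ ¬ G.Adj p q ∧ ¬ G.Adj v p ∧ ¬ G.Adj v q ∧
      p ≠ q ∧ p ≠ v ∧ q ≠ v) ∨
    (∃ p q, G.Adj v p ∧ G.Adj v q ∧ ¬ G.Adj p q ∧ ¬ G.Adj u p ∧ ¬ G.Adj u q ∧
      p ≠ q ∧ p ≠ u ∧ q ≠ u) := by
  obtain ⟨f⟩ := hcopy
  set G' := G ⊔ SimpleGraph.fromEdgeSet {s(u, v)} with hG'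
  have hadj : ∀ p q : V, G'.Adj p q ↔ G.Adj p q ∨ (s(p, q) = s(u, v) ∧ p ≠ q) := by
    intro p q
    rw [hG', SimpleGraph.sup_adj, SimpleGraph.fromEdgeSet_adj]
    simp
  have h01 : G'.Adj (f 0) (f 1) := f.map_rel_iff.mpr (by simp [claw, SimpleGraph.fromRel_adj])
  have h02 : G'.Adj (f 0) (f 2) := f.map_rel_iff.mpr (by simp [claw, SimpleGraph.fromRel_adj])
  have h03 : G'.Adj (f 0) (f 3) := f.map_rel_iff.mpr (by simp [claw, SimpleGraph.fromRel_adj])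
  have n12 : ¬ G'.Adj (f 1) (f 2) := fun hh => by
    have := f.map_rel_iff.mp hh; simp [claw, SimpleGraph.fromRel_adj] at this
  have n13 : ¬ G'.Adj (f 1) (f 3) := fun hh => by
    have := f.map_rel_iff.mp hh; simp [claw, SimpleGraph.fromRel_adj] at this
  have n23 : ¬ G'.Adj (f 2) (f 3) := fun hh => by
    have := f.map_rel_iff.mp hh; simp [claw, SimpleGraph.fromRel_adj] at this
  have hinj := f.injective
  have d12 : f 1 ≠ f 2 := fun e => by have := hinj e; simp at this
  have d13 : f 1 ≠ f 3 := fun e => by have := hinj e; simp at this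
  have d23 : f 2 ≠ f 3 := fun e => by have := hinj e; simp at this
  have m12 : ¬ G.Adj (f 1) (f 2) := fun hh => n12 ((hadj _ _).mpr (Or.inl hh))
  have m13 : ¬ G.Adj (f 1) (f 3) := fun hh => n13 ((hadj _ _).mpr (Or.inl hh))
  have m23 : ¬ G.Adj (f 2) (f 3) := fun hh => n23 ((hadj _ _).mpr (Or.inl hh))
  have getAdj : ∀ i : Fin 4, G'.Adj (f 0) (f i) → s(f 0, f i) ≠ s(u, v) → G.Adj (f 0) (f i) := by
    intro i hh hne
    rcases (hadj _ _).mp hh with h | ⟨hs, _⟩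
    exacts [h, absurd hs hne]
  by_cases k1 : s(f 0, f 1) = s(u, v)
  · have e2 : s(f 0, f 2) ≠ s(u, v) := fun he => by
      rcases Sym2.eq_iff.mp (he.trans k1.symm) with ⟨h1, h2⟩ | ⟨h1, h2⟩
      exacts [d12 h2.symm, h01.ne h1]
    have e3 : s(f 0, f 3) ≠ s(u, v) := fun he => by
      rcases Sym2.eq_iff.mp (he.trans k1.symm) with ⟨h1, h2⟩ | ⟨h1, h2⟩
      exacts [d13 h2.symm, h01.ne h1]
    exact add_helper (getAdj 2 h02 e2) (getAdj 3 h03 e3) m23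
      m12 m13 d23 d12.symm d13.symm k1
  · by_cases k2 : s(f 0, f 2) = s(u, v)
    · have e1 : s(f 0, f 1) ≠ s(u, v) := fun he => by
        rcases Sym2.eq_iff.mp (he.trans k2.symm) with ⟨h1, h2⟩ | ⟨h1, h2⟩
        exacts [d12 h2, h02.ne h1]
      have e3 : s(f 0, f 3) ≠ s(u, v) := fun he => by
        rcases Sym2.eq_iff.mp (he.trans k2.symm) with ⟨h1, h2⟩ | ⟨h1, h2⟩
        exacts [d23 h2.symm, h02.ne h1]
      exact add_helper (getAdj 1 h01 e1) (getAdj 3 h03 e3) m13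
        (fun hh => m12 hh.symm) m23 d13 d12 d23.symm k2
    · by_cases k3 : s(f 0, f 3) = s(u, v)
      · have e1 : s(f 0, f 1) ≠ s(u, v) := fun he => by
          rcases Sym2.eq_iff.mp (he.trans k3.symm) with ⟨h1, h2⟩ | ⟨h1, h2⟩
          exacts [d13 h2, h03.ne h1]
        have e2 : s(f 0, f 2) ≠ s(u, v) := fun he => by
          rcases Sym2.eq_iff.mp (he.trans k3.symm) with ⟨h1, h2⟩ | ⟨h1, h2⟩
          exacts [d23 h2, h03.ne h1]
        exact add_helper (getAdj 1 h01 e1) (getAdj 2 h02 e2) m12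
          (fun hh => m13 hh.symm) (fun hh => m23 hh.symm) d12 d13 d23 k3
      · exact absurd (noclaw hfree d12 d13 d23 (getAdj 1 h01 k1) (getAdj 2 h02 k2)
          (getAdj 3 h03 k3) m12 m13 m23) id


/-- consequence of edge-deletion saturation plus claw-freeness -/
def P2 (G : SimpleGraph V) : Prop :=
  ∀ u w : V, G.Adj u w → ∃ x y, G.Adj x u ∧ G.Adj x w ∧ G.Adj x y ∧
    ¬ G.Adj y u ∧ ¬ G.Adj y w ∧ y ≠ u ∧ y ≠ w

/-- consequence of edge-addition saturation plus claw-freeness -/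
def P3 (G : SimpleGraph V) : Prop :=
  ∀ u w : V, u ≠ w → ¬ G.Adj u w →
    (∃ p q, G.Adj u p ∧ G.Adj u q ∧ ¬ G.Adj p q ∧ ¬ G.Adj w p ∧ ¬ G.Adj w q ∧
      p ≠ q ∧ p ≠ w ∧ q ≠ w) ∨
    (∃ p q, G.Adj w p ∧ G.Adj w q ∧ ¬ G.Adj p q ∧ ¬ G.Adj u p ∧ ¬ G.Adj u q ∧
      p ≠ q ∧ p ≠ u ∧ q ≠ u)

lemma iso2K2 {v a b c d : V}
    (hmem : ∀ t, G.Adj v t ↔ t = a ∨ t = b ∨ t = c ∨ t = d)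
    (hab' : a ≠ b) (hac' : a ≠ c) (had' : a ≠ d) (hbc' : b ≠ c) (hbd' : b ≠ d) (hcd' : c ≠ d)
    (hab : G.Adj a b) (hcd : G.Adj c d)
    (nac : ¬ G.Adj a c) (nad : ¬ G.Adj a d) (nbc : ¬ G.Adj b c) (nbd : ¬ G.Adj b d) :
    Nonempty ((G.induce (G.neighborSet v)) ≃g twoK2) := by
  classical
  have ha : a ∈ G.neighborSet v := (hmem a).mpr (by tauto)
  have hb : b ∈ G.neighborSet v := (hmem b).mpr (by tauto)
  have hc : c ∈ G.neighborSet v := (hmem c).mpr (by tauto)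
  have hd : d ∈ G.neighborSet v := (hmem d).mpr (by tauto)
  have nca : ¬ G.Adj c a := fun h => nac h.symm
  have nda : ¬ G.Adj d a := fun h => nad h.symm
  have ncb : ¬ G.Adj c b := fun h => nbc h.symm
  have ndb : ¬ G.Adj d b := fun h => nbd h.symm
  let F : Fin 2 × Fin 2 → ↥(G.neighborSet v) :=
    fun p => ![![⟨a, ha⟩, ⟨b, hb⟩], ![⟨c, hc⟩, ⟨d, hd⟩]] p.1 p.2
  let I : ↥(G.neighborSet v) → Fin 2 × Fin 2 := fun x =>
    if x.1 = a then (0, 0) else if x.1 = b then (0, 1) else if x.1 = c then (1, 0) else (1, 1)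
  refine ⟨SimpleGraph.Iso.symm ⟨⟨F, I, ?_, ?_⟩, ?_⟩⟩
  · intro p
    fin_cases p <;>
      simp [F, I, hab', hac', had', hbc', hbd', hcd',
        hab'.symm, hac'.symm, had'.symm, hbc'.symm, hbd'.symm, hcd'.symm]
  · rintro ⟨x, hx⟩
    rcases (hmem x).mp hx with rfl | rfl | rfl | rfl <;>
      simp [F, I, hab', hac', had', hbc', hbd', hcd',
        hab'.symm, hac'.symm, had'.symm, hbc'.symm, hbd'.symm, hcd'.symm]
  · intro p q
    fin_cases p <;> fin_cases q <;>
      first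
        | exact iff_of_true hab (by simp [twoK2, SimpleGraph.fromRel_adj] <;> decide)
        | exact iff_of_true hab.symm (by simp [twoK2, SimpleGraph.fromRel_adj] <;> decide)
        | exact iff_of_true hcd (by simp [twoK2, SimpleGraph.fromRel_adj] <;> decide)
        | exact iff_of_true hcd.symm (by simp [twoK2, SimpleGraph.fromRel_adj] <;> decide)
        | exact iff_of_false (SimpleGraph.irrefl _) (by simp [twoK2, SimpleGraph.fromRel_adj] <;> decide)
        | exact iff_of_false nac (by simp [twoK2, SimpleGraph.fromRel_adj] <;> decide)
        | exact iff_of_false nad (by simp [twoK2, SimpleGraph.fromRel_adj] <;> decide)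
        | exact iff_of_false nbc (by simp [twoK2, SimpleGraph.fromRel_adj] <;> decide)
        | exact iff_of_false nbd (by simp [twoK2, SimpleGraph.fromRel_adj] <;> decide)
        | exact iff_of_false nca (by simp [twoK2, SimpleGraph.fromRel_adj] <;> decide)
        | exact iff_of_false nda (by simp [twoK2, SimpleGraph.fromRel_adj] <;> decide)
        | exact iff_of_false ncb (by simp [twoK2, SimpleGraph.fromRel_adj] <;> decide)
        | exact iff_of_false ndb (by simp [twoK2, SimpleGraph.fromRel_adj] <;> decide)

lemma isoP4 {v a b c d : V}
    (hmem : ∀ t, G.Adj v t ↔ t = a ∨ t = b ∨ t = c ∨ t = d)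
    (hab' : a ≠ b) (hac' : a ≠ c) (had' : a ≠ d) (hbc' : b ≠ c) (hbd' : b ≠ d) (hcd' : c ≠ d)
    (hab : G.Adj a b) (hbc : G.Adj b c) (hcd : G.Adj c d)
    (nac : ¬ G.Adj a c) (nad : ¬ G.Adj a d) (nbd : ¬ G.Adj b d) :
    Nonempty ((G.induce (G.neighborSet v)) ≃g path4) := by
  classical
  have ha : a ∈ G.neighborSet v := (hmem a).mpr (by tauto)
  have hb : b ∈ G.neighborSet v := (hmem b).mpr (by tauto)
  have hc : c ∈ G.neighborSet v := (hmem c).mpr (by tauto)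
  have hd : d ∈ G.neighborSet v := (hmem d).mpr (by tauto)
  have nca : ¬ G.Adj c a := fun h => nac h.symm
  have nda : ¬ G.Adj d a := fun h => nad h.symm
  have ndb : ¬ G.Adj d b := fun h => nbd h.symm
  let F : Fin 4 → ↥(G.neighborSet v) := ![⟨a, ha⟩, ⟨b, hb⟩, ⟨c, hc⟩, ⟨d, hd⟩]
  let I : ↥(G.neighborSet v) → Fin 4 := fun x =>
    if x.1 = a then 0 else if x.1 = b then 1 else if x.1 = c then 2 else 3
  refine ⟨SimpleGraph.Iso.symm ⟨⟨F, I, ?_, ?_⟩, ?_⟩⟩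
  · intro p
    fin_cases p <;>
      simp [F, I, hab', hac', had', hbc', hbd', hcd',
        hab'.symm, hac'.symm, had'.symm, hbc'.symm, hbd'.symm, hcd'.symm]
  · rintro ⟨x, hx⟩
    rcases (hmem x).mp hx with rfl | rfl | rfl | rfl <;>
      simp [F, I, hab', hac', had', hbc', hbd', hcd',
        hab'.symm, hac'.symm, had'.symm, hbc'.symm, hbd'.symm, hcd'.symm]
  · intro p q
    fin_cases p <;> fin_cases q <;>
      first
        | exact iff_of_true hab (by simp [path4, SimpleGraph.fromRel_adj] <;> decide)
        | exact iff_of_true hab.symm (by simp [path4, SimpleGraph.fromRel_adj] <;> decide)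
        | exact iff_of_true hbc (by simp [path4, SimpleGraph.fromRel_adj] <;> decide)
        | exact iff_of_true hbc.symm (by simp [path4, SimpleGraph.fromRel_adj] <;> decide)
        | exact iff_of_true hcd (by simp [path4, SimpleGraph.fromRel_adj] <;> decide)
        | exact iff_of_true hcd.symm (by simp [path4, SimpleGraph.fromRel_adj] <;> decide)
        | exact iff_of_false (SimpleGraph.irrefl _) (by simp [path4, SimpleGraph.fromRel_adj] <;> decide)
        | exact iff_of_false nac (by simp [path4, SimpleGraph.fromRel_adj] <;> decide)
        | exact iff_of_false nad (by simp [path4, SimpleGraph.fromRel_adj] <;> decide)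
        | exact iff_of_false nbd (by simp [path4, SimpleGraph.fromRel_adj] <;> decide)
        | exact iff_of_false nca (by simp [path4, SimpleGraph.fromRel_adj] <;> decide)
        | exact iff_of_false nda (by simp [path4, SimpleGraph.fromRel_adj] <;> decide)
        | exact iff_of_false ndb (by simp [path4, SimpleGraph.fromRel_adj] <;> decide)

section Deg
variable [Fintype V] [DecidableRel G.Adj]

lemma fourth {u x y z : V} (hdeg : G.degree u = 4)
    (hx : G.Adj u x) (hy : G.Adj u y) (hz : G.Adj u z)
    (hxy : x ≠ y) (hxz : x ≠ z) (hyz : y ≠ z) :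
    ∃ w, w ≠ x ∧ w ≠ y ∧ w ≠ z ∧ ∀ t, G.Adj u t ↔ t = x ∨ t = y ∨ t = z ∨ t = w := by
  classical
  set s := G.neighborFinset u with hs
  have hcard : s.card = 4 := hdeg
  have hsub : ({x, y, z} : Finset V) ⊆ s := by
    intro t ht
    simp only [Finset.mem_insert, Finset.mem_singleton] at ht
    rcases ht with rfl | rfl | rfl <;> simp [hs, hx, hy, hz]
  have hc3 : ({x, y, z} : Finset V).card = 3 := by
    rw [Finset.card_insert_of_notMem (by simp [hxy, hxz]),
      Finset.card_insert_of_notMem (by simp [hyz]), Finset.card_singleton]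
  have hone : (s \ {x, y, z}).card = 1 := by
    rw [Finset.card_sdiff_of_subset hsub, hcard, hc3]
  obtain ⟨w, hw⟩ := Finset.card_eq_one.mp hone
  have hwmem : w ∈ s \ ({x, y, z} : Finset V) := hw ▸ Finset.mem_singleton_self w
  have hwn : w ∉ ({x, y, z} : Finset V) := (Finset.mem_sdiff.mp hwmem).2
  refine ⟨w, ?_, ?_, ?_, ?_⟩
  · intro e; exact hwn (by simp [e])
  · intro e; exact hwn (by simp [e])
  · intro e; exact hwn (by simp [e])
  · intro t
    have : t ∈ s ↔ t ∈ ({x, y, z} : Finset V) ∪ (s \ {x, y, z}) := by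
      rw [Finset.union_sdiff_of_subset hsub]
    rw [show (G.Adj u t ↔ t ∈ s) from (G.mem_neighborFinset u t).symm, this, hw]
    simp [or_assoc]

lemma four_exact {u x y z w : V} (hdeg : G.degree u = 4)
    (hx : G.Adj u x) (hy : G.Adj u y) (hz : G.Adj u z) (hw : G.Adj u w)
    (hxy : x ≠ y) (hxz : x ≠ z) (hxw : x ≠ w) (hyz : y ≠ z) (hyw : y ≠ w) (hzw : z ≠ w) :
    ∀ t, G.Adj u t ↔ t = x ∨ t = y ∨ t = z ∨ t = w := by
  obtain ⟨w', e1, e2, e3, hchar⟩ := fourth hdeg hx hy hz hxy hxz hyz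
  rcases (hchar w).mp hw with e | e | e | e
  · exact absurd e.symm hxw
  · exact absurd e.symm hyw
  · exact absurd e.symm hzw
  · exact e ▸ hchar

lemma nbhd_four {v : V} (hdeg : G.degree v = 4) :
    ∃ a b c d : V, a ≠ b ∧ a ≠ c ∧ a ≠ d ∧ b ≠ c ∧ b ≠ d ∧ c ≠ d ∧
      ∀ t, G.Adj v t ↔ t = a ∨ t = b ∨ t = c ∨ t = d := by
  classical
  have h4 : (G.neighborFinset v).card = 4 := hdeg
  have hpos : 0 < (G.neighborFinset v).card := by omega
  obtain ⟨a, ha⟩ := Finset.card_pos.mp hpos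
  have hva : G.Adj v a := (G.mem_neighborFinset v a).mp ha
  -- remove a, still 3 left
  have h3 : ((G.neighborFinset v).erase a).card = 3 := by
    rw [Finset.card_erase_of_mem ha, h4]
  obtain ⟨b, c, d, hbc, hbd, hcd, habc⟩ := Finset.card_eq_three.mp h3
  have hb : b ∈ (G.neighborFinset v).erase a := by rw [habc]; simp
  have hc : c ∈ (G.neighborFinset v).erase a := by rw [habc]; simp
  have hd : d ∈ (G.neighborFinset v).erase a := by rw [habc]; simp
  have hab : a ≠ b := fun e => (Finset.mem_erase.mp hb).1 e.symm
  have hac : a ≠ c := fun e => (Finset.mem_erase.mp hc).1 e.symm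
  have had : a ≠ d := fun e => (Finset.mem_erase.mp hd).1 e.symm
  refine ⟨a, b, c, d, hab, hac, had, hbc, hbd, hcd, ?_⟩
  intro t
  rw [show (G.Adj v t ↔ t ∈ G.neighborFinset v) from (G.mem_neighborFinset v t).symm]
  constructor
  · intro ht
    by_cases hta : t = a
    · exact Or.inl hta
    · have : t ∈ (G.neighborFinset v).erase a := Finset.mem_erase.mpr ⟨hta, ht⟩
      rw [habc] at this; simp at this; tauto
  · rintro (rfl | rfl | rfl | rfl)
    exacts [ha, (Finset.mem_erase.mp hb).2, (Finset.mem_erase.mp hc).2, (Finset.mem_erase.mp hd).2]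

lemma step1 {v a b c d : V} (hF2 : P2 G)
    (hmem : ∀ t, G.Adj v t ↔ t = a ∨ t = b ∨ t = c ∨ t = d)
    (na : ¬ G.Adj a d) (nb : ¬ G.Adj b d) (nc : ¬ G.Adj c d) : False := by
  have hvd : G.Adj v d := (hmem d).mpr (by tauto)
  obtain ⟨x, y, hxv, hxd, -, -, -, -, -⟩ := hF2 v d hvd
  rcases (hmem x).mp hxv.symm with e | e | e | e <;> rw [e] at hxd
  exacts [na hxd, nb hxd, nc hxd, hxd.ne rfl]

lemma step2aux2 {v a b c d w : V} (hF2 : P2 G)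
    (hmem : ∀ t, G.Adj v t ↔ t = a ∨ t = b ∨ t = c ∨ t = d)
    (dab : a ≠ b) (dac : a ≠ c) (dad : a ≠ d) (dbc : b ≠ c) (dbd : b ≠ d) (dcd : c ≠ d)
    (hab : G.Adj a b) (hac : G.Adj a c) (had : G.Adj a d)
    (degc : G.degree c = 4)
    (hNa : ∀ t, G.Adj a t ↔ t = v ∨ t = b ∨ t = c ∨ t = d)
    (hNb : ∀ t, G.Adj b t ↔ t = v ∨ t = a ∨ t = w ∨ t = c)
    (dwd : w ≠ d) : False := by
  have hva : G.Adj v a := (hmem a).mpr (by tauto)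
  have hvb : G.Adj v b := (hmem b).mpr (by tauto)
  have hvc : G.Adj v c := (hmem c).mpr (by tauto)
  have hvd : G.Adj v d := (hmem d).mpr (by tauto)
  have hbd : ¬ G.Adj b d := fun hh => by
    rcases (hNb d).mp hh with e | e | e | e
    exacts [hvd.ne e.symm, dad e.symm, dwd e.symm, dcd e.symm]
  obtain ⟨x, y, hxa, hxd, hxy, nya, nyd, dya, dyd⟩ := hF2 a d had
  rcases (hNa x).mp hxa.symm with e | e | e | e
  · rw [e] at hxy
    rcases (hmem y).mp hxy with f | f | f | f
    exacts [dya f, nya (by rw [f]; exact hab.symm), nya (by rw [f]; exact hac.symm), dyd f]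
  · rw [e] at hxd; exact hbd hxd
  · rw [e] at hxd hxy
    have hbc : G.Adj b c := (hNb c).mpr (by tauto)
    have hNc : ∀ t, G.Adj c t ↔ t = v ∨ t = a ∨ t = b ∨ t = d :=
      four_exact degc hvc.symm hac.symm hbc.symm hxd hva.ne hvb.ne hvd.ne dab dad dbd
    rcases (hNc y).mp hxy with f | f | f | f
    exacts [nya (by rw [f]; exact hva), dya f, nya (by rw [f]; exact hab.symm), dyd f]
  · rw [e] at hxd; exact hxd.ne rfl

lemma step2aux {v a b c d w : V} (hF2 : P2 G)
    (hmem : ∀ t, G.Adj v t ↔ t = a ∨ t = b ∨ t = c ∨ t = d)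
    (dab : a ≠ b) (dac : a ≠ c) (dad : a ≠ d) (dbc : b ≠ c) (dbd : b ≠ d) (dcd : c ≠ d)
    (hab : G.Adj a b) (hac : G.Adj a c) (had : G.Adj a d)
    (hdegN : ∀ u, G.Adj v u → G.degree u = 4)
    (hbw : G.Adj b w) (nvw : ¬ G.Adj v w) (naw : ¬ G.Adj a w)
    (dwv : w ≠ v) (dwa : w ≠ a) (dwc : w ≠ c) (dwd : w ≠ d) : False := by
  have hva : G.Adj v a := (hmem a).mpr (by tauto)
  have hvb : G.Adj v b := (hmem b).mpr (by tauto)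
  have hvc : G.Adj v c := (hmem c).mpr (by tauto)
  have hvd : G.Adj v d := (hmem d).mpr (by tauto)
  have hNa : ∀ t, G.Adj a t ↔ t = v ∨ t = b ∨ t = c ∨ t = d :=
    four_exact (hdegN a hva) hva.symm hab hac had hvb.ne hvc.ne hvd.ne dbc dbd dcd
  obtain ⟨z, dzv, dza, dzw, hNb⟩ := fourth (hdegN b hvb) hvb.symm hab.symm hbw
    hva.ne dwv.symm dwa.symm
  by_cases hzc : z = c
  · rw [hzc] at hNb
    exact step2aux2 hF2 hmem dab dac dad dbc dbd dcd hab hac had (hdegN c hvc) hNa hNb dwd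
  by_cases hzd : z = d
  · rw [hzd] at hNb
    exact step2aux2 hF2 (fun t => (hmem t).trans (by tauto))
      dab dad dac dbd dbc dcd.symm hab had hac (hdegN d hvd)
      (fun t => (hNa t).trans (by tauto)) hNb dwc
  · have hbc : ¬ G.Adj b c := fun hh => by
      rcases (hNb c).mp hh with e | e | e | e
      exacts [hvc.ne e.symm, dac e.symm, dwc e.symm, hzc e.symm]
    have hbd : ¬ G.Adj b d := fun hh => by
      rcases (hNb d).mp hh with e | e | e | e
      exacts [hvd.ne e.symm, dad e.symm, dwd e.symm, hzd e.symm]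
    obtain ⟨x, y, hxa, hxb, hxy, nya, nyb, dya, dyb⟩ := hF2 a b hab
    rcases (hNa x).mp hxa.symm with e | e | e | e
    · rw [e] at hxy
      rcases (hmem y).mp hxy with f | f | f | f
      exacts [dya f, dyb f, nya (by rw [f]; exact hac.symm), nya (by rw [f]; exact had.symm)]
    · rw [e] at hxb; exact hxb.ne rfl
    · rw [e] at hxb; exact hbc hxb.symm
    · rw [e] at hxb; exact hbd hxb.symm

lemma step2 {v a b c d : V} (hF2 : P2 G)
    (hmem : ∀ t, G.Adj v t ↔ t = a ∨ t = b ∨ t = c ∨ t = d)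
    (dab : a ≠ b) (dac : a ≠ c) (dad : a ≠ d) (dbc : b ≠ c) (dbd : b ≠ d) (dcd : c ≠ d)
    (hdegN : ∀ u, G.Adj v u → G.degree u = 4)
    (hab : G.Adj a b) (hac : G.Adj a c) (had : G.Adj a d) : False := by
  have hva : G.Adj v a := (hmem a).mpr (by tauto)
  have hvb : G.Adj v b := (hmem b).mpr (by tauto)
  have hvc : G.Adj v c := (hmem c).mpr (by tauto)
  have hvd : G.Adj v d := (hmem d).mpr (by tauto)
  obtain ⟨x, y, hxv, hxa, hxy, nyv, nya, dyv, dya⟩ := hF2 v a hva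
  have dyb : y ≠ b := fun e => nyv (by rw [e]; exact hvb.symm)
  have dyc : y ≠ c := fun e => nyv (by rw [e]; exact hvc.symm)
  have dyd : y ≠ d := fun e => nyv (by rw [e]; exact hvd.symm)
  have nvy : ¬ G.Adj v y := fun hh => nyv hh.symm
  have nay : ¬ G.Adj a y := fun hh => nya hh.symm
  rcases (hmem x).mp hxv.symm with e | e | e | e
  · rw [e] at hxa; exact hxa.ne rfl
  · rw [e] at hxy
    exact step2aux hF2 hmem dab dac dad dbc dbd dcd hab hac had hdegN
      hxy nvy nay dyv dya dyc dyd
  · rw [e] at hxy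
    exact step2aux hF2 (fun t => (hmem t).trans (by tauto))
      dac dab dad dbc.symm dcd dbd hac hab had hdegN
      hxy nvy nay dyv dya dyb dyd
  · rw [e] at hxy
    exact step2aux hF2 (fun t => (hmem t).trans (by tauto))
      dad dab dac dbd.symm dcd.symm dbc had hab hac hdegN
      hxy nvy nay dyv dya dyb dyc

lemma c4core {v a b c d x : V} (hF2 : P2 G)
    (hmem : ∀ t, G.Adj v t ↔ t = a ∨ t = b ∨ t = c ∨ t = d)
    (nac : ¬ G.Adj a c) (hax : G.Adj a x)
    (hNb : ∀ t, G.Adj b t ↔ t = v ∨ t = a ∨ t = c ∨ t = x)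
    (hNd : ∀ t, G.Adj d t ↔ t = v ∨ t = a ∨ t = c ∨ t = x) : False := by
  have hva : G.Adj v a := (hmem a).mpr (by tauto)
  have hvc : G.Adj v c := (hmem c).mpr (by tauto)
  obtain ⟨x₀, y, hxv, hxa, hxy, nyv, nya, dyv, dya⟩ := hF2 v a hva
  rcases (hmem x₀).mp hxv.symm with e | e | e | e
  · rw [e] at hxa; exact hxa.ne rfl
  · rw [e] at hxy
    rcases (hNb y).mp hxy with f | f | f | f
    exacts [dyv f, dya f, nyv (by rw [f]; exact hvc.symm), nya (by rw [f]; exact hax.symm)]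
  · rw [e] at hxa; exact nac hxa.symm
  · rw [e] at hxy
    rcases (hNd y).mp hxy with f | f | f | f
    exacts [dyv f, dya f, nyv (by rw [f]; exact hvc.symm), nya (by rw [f]; exact hax.symm)]

lemma c4aux {v a b c d x : V} (hfree : ¬ HasInducedCopy claw G)
    (hF2 : P2 G) (hF3 : P3 G)
    (hmem : ∀ t, G.Adj v t ↔ t = a ∨ t = b ∨ t = c ∨ t = d)
    (dab : a ≠ b) (dac : a ≠ c) (dad : a ≠ d) (dbc : b ≠ c) (dbd : b ≠ d) (dcd : c ≠ d)
    (hdegN : ∀ u, G.Adj v u → G.degree u = 4)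
    (hab : G.Adj a b) (hbc : G.Adj b c) (hcd : G.Adj c d) (hda : G.Adj d a)
    (nac : ¬ G.Adj a c) (nbd : ¬ G.Adj b d)
    (hNa : ∀ t, G.Adj a t ↔ t = v ∨ t = b ∨ t = d ∨ t = x)
    (hNb : ∀ t, G.Adj b t ↔ t = v ∨ t = a ∨ t = c ∨ t = x)
    (dxv : x ≠ v) (dxa : x ≠ a) (dxb : x ≠ b) (dxc : x ≠ c) (dxd : x ≠ d)
    (nvx : ¬ G.Adj v x) : False := by
  have hva : G.Adj v a := (hmem a).mpr (by tauto)
  have hvb : G.Adj v b := (hmem b).mpr (by tauto)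
  have hvc : G.Adj v c := (hmem c).mpr (by tauto)
  have hvd : G.Adj v d := (hmem d).mpr (by tauto)
  have hax : G.Adj a x := (hNa x).mpr (by tauto)
  have hbx : G.Adj b x := (hNb x).mpr (by tauto)
  obtain ⟨y, dyv, dyb, dyd, hNc⟩ := fourth (hdegN c hvc) hvc.symm hbc.symm hcd
    hvb.ne hvd.ne dbd
  obtain ⟨z, dzv, dza, dzc, hNd⟩ := fourth (hdegN d hvd) hvd.symm hda hcd.symm
    hva.ne hvc.ne dac
  have hcy : G.Adj c y := (hNc y).mpr (by tauto)
  have hdz : G.Adj d z := (hNd z).mpr (by tauto)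
  have hby_or : G.Adj b y ∨ G.Adj d y := by
    by_contra hcon
    push_neg at hcon
    exact noclaw hfree dbd dyb.symm dyd.symm hbc.symm hcd hcy nbd hcon.1 hcon.2
  have dya : y ≠ a := fun e => nac ((by rw [← e]; exact hcy.symm) : G.Adj a c)
  rcases hby_or with hby | hdy
  · -- y = x, then use claw at d
    have hyx : y = x := by
      rcases (hNb y).mp hby with f | f | f | f
      exacts [absurd f dyv, absurd f dya, absurd (f ▸ hcy) (G.irrefl), f]
    rw [hyx] at hNc
    have haz_or : G.Adj a z ∨ G.Adj c z := by
      by_contra hcon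
      push_neg at hcon
      exact noclaw hfree dac dza.symm dzc.symm hda hcd.symm hdz nac hcon.1 hcon.2
    have hzx : z = x := by
      rcases haz_or with haz | hcz
      · rcases (hNa z).mp haz with f | f | f | f
        exacts [absurd f dzv, absurd (by rw [← f]; exact hdz.symm) nbd,
          absurd (f ▸ hdz) (G.irrefl), f]
      · rcases (hNc z).mp hcz with f | f | f | f
        exacts [absurd f dzv, absurd (by rw [← f]; exact hdz.symm) nbd,
          absurd (f ▸ hdz) (G.irrefl), f]
    rw [hzx] at hNd
    exact c4core hF2 hmem nac hax hNb hNd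
  · have hyz : y = z := by
      rcases (hNd y).mp hdy with f | f | f | f
      exacts [absurd f dyv, absurd f dya, absurd (f ▸ hcy) (G.irrefl), f]
    rw [← hyz] at hNd
    by_cases hxy : x = y
    · rw [← hxy] at hNd
      exact c4core hF2 hmem nac hax hNb hNd
    · rcases hF3 v x dxv.symm nvx with
        ⟨p, q, hvp, hvq, npq, nxp, nxq, dpq, dpx, dqx⟩ |
        ⟨p, q, hxp, hxq, npq, nvp, nvq, dpq, dpv, dqv⟩
      · have hp : p = c ∨ p = d := by
          rcases (hmem p).mp hvp with f | f | f | f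
          exacts [absurd (by rw [f]; exact hax.symm) nxp,
            absurd (by rw [f]; exact hbx.symm) nxp, Or.inl f, Or.inr f]
        have hq : q = c ∨ q = d := by
          rcases (hmem q).mp hvq with f | f | f | f
          exacts [absurd (by rw [f]; exact hax.symm) nxq,
            absurd (by rw [f]; exact hbx.symm) nxq, Or.inl f, Or.inr f]
        rcases hp with rfl | rfl
        · rcases hq with rfl | rfl
          exacts [dpq rfl, npq hcd]
        · rcases hq with rfl | rfl
          exacts [npq hcd.symm, dpq rfl]
      · have nap : ¬ G.Adj a p := fun hh => by
          rcases (hNa p).mp hh with f | f | f | f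
          exacts [dpv f, nvp (by rw [f]; exact hvb),
            nvp (by rw [f]; exact hvd), hxp.ne f.symm]
        have naq : ¬ G.Adj a q := fun hh => by
          rcases (hNa q).mp hh with f | f | f | f
          exacts [dqv f, nvq (by rw [f]; exact hvb),
            nvq (by rw [f]; exact hvd), hxq.ne f.symm]
        have dap : a ≠ p := fun e => nvp (by rw [← e]; exact hva)
        have daq : a ≠ q := fun e => nvq (by rw [← e]; exact hva)
        exact noclaw hfree dap daq dpq hax.symm hxp hxq nap naq npq

lemma noC4 {v a b c d : V} (hfree : ¬ HasInducedCopy claw G)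
    (hF2 : P2 G) (hF3 : P3 G)
    (hmem : ∀ t, G.Adj v t ↔ t = a ∨ t = b ∨ t = c ∨ t = d)
    (dab : a ≠ b) (dac : a ≠ c) (dad : a ≠ d) (dbc : b ≠ c) (dbd : b ≠ d) (dcd : c ≠ d)
    (hdegN : ∀ u, G.Adj v u → G.degree u = 4)
    (hab : G.Adj a b) (hbc : G.Adj b c) (hcd : G.Adj c d) (had : G.Adj a d)
    (nac : ¬ G.Adj a c) (nbd : ¬ G.Adj b d) : False := by
  have hva : G.Adj v a := (hmem a).mpr (by tauto)
  have hvb : G.Adj v b := (hmem b).mpr (by tauto)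
  have hvc : G.Adj v c := (hmem c).mpr (by tauto)
  have hvd : G.Adj v d := (hmem d).mpr (by tauto)
  obtain ⟨x, dxv, dxb, dxd, hNa⟩ := fourth (hdegN a hva) hva.symm hab had
    hvb.ne hvd.ne dbd
  have hax : G.Adj a x := (hNa x).mpr (by tauto)
  have dxa : x ≠ a := hax.ne'
  have dxc : x ≠ c := fun e => nac (by rw [← e]; exact hax)
  have nvx : ¬ G.Adj v x := fun hh => by
    rcases (hmem x).mp hh with f | f | f | f
    exacts [dxa f, dxb f, dxc f, dxd f]
  have hbx_or : G.Adj b x ∨ G.Adj d x := by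
    by_contra hcon
    push_neg at hcon
    exact noclaw hfree dbd dxb.symm dxd.symm hab had hax nbd hcon.1 hcon.2
  rcases hbx_or with hbx | hdx
  · obtain ⟨xb, exb1, exb2, exb3, hNb⟩ := fourth (hdegN b hvb) hvb.symm hab.symm hbc
      hva.ne hvc.ne dac
    have hxxb : x = xb := by
      rcases (hNb x).mp hbx with f | f | f | f
      exacts [absurd f dxv, absurd f dxa, absurd f dxc, f]
    rw [← hxxb] at hNb
    exact c4aux hfree hF2 hF3 hmem dab dac dad dbc dbd dcd hdegN
      hab hbc hcd had.symm nac nbd hNa hNb dxv dxa dxb dxc dxd nvx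
  · obtain ⟨xd, exd1, exd2, exd3, hNd⟩ := fourth (hdegN d hvd) hvd.symm hcd.symm had.symm
      hvc.ne hva.ne dac.symm
    have hxxd : x = xd := by
      rcases (hNd x).mp hdx with f | f | f | f
      exacts [absurd f dxv, absurd f dxc, absurd f dxa, f]
    rw [← hxxd] at hNd
    exact c4aux hfree hF2 hF3 (fun t => (hmem t).trans (by tauto))
      dad dac dab dcd.symm dbd.symm dbc.symm hdegN
      had hcd.symm hbc.symm hab.symm nac (fun hh => nbd hh.symm)
      (fun t => (hNa t).trans (by tauto)) (fun t => (hNd t).trans (by tauto))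
      dxv dxa dxd dxc dxb nvx

end Deg
end Helpers

set_option maxHeartbeats 4000000 in
theorem claw_indSat_neighborhood_structure {V : Type*} [Fintype V] (G : SimpleGraph V)
    [DecidableRel G.Adj] (h : IsIndSat G claw) (v : V)
    (hdeg : ∀ u : V, u ∈ insert v (G.neighborSet v) → G.degree u = 4) :
    Nonempty ((G.induce (G.neighborSet v)) ≃g twoK2) ∨
    Nonempty ((G.induce (G.neighborSet v)) ≃g path4) := by
  classical
  obtain ⟨hfree, hdel, hadd⟩ := h
  have hF2 : P2 G := fun u w huw => edge_del hfree (hdel u w huw)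
  have hF3 : P3 G := fun u w hne hnadj => edge_add hfree hne (hadd u w hne hnadj)
  have degv : G.degree v = 4 := hdeg v (Set.mem_insert _ _)
  have hdegN : ∀ u, G.Adj v u → G.degree u = 4 := fun u hu =>
    hdeg u (Set.mem_insert_of_mem _ ((G.mem_neighborSet v u).mpr hu))
  obtain ⟨a, b, c, d, dab, dac, dad, dbc, dbd, dcd, hmem⟩ := nbhd_four degv
  have pm_bacd : ∀ t, G.Adj v t ↔ t = b ∨ t = a ∨ t = c ∨ t = d := fun t => (hmem t).trans (by tauto)
  have pm_cabd : ∀ t, G.Adj v t ↔ t = c ∨ t = a ∨ t = b ∨ t = d := fun t => (hmem t).trans (by tauto)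
  have pm_dabc : ∀ t, G.Adj v t ↔ t = d ∨ t = a ∨ t = b ∨ t = c := fun t => (hmem t).trans (by tauto)
  have pm_bcda : ∀ t, G.Adj v t ↔ t = b ∨ t = c ∨ t = d ∨ t = a := fun t => (hmem t).trans (by tauto)
  have pm_acdb : ∀ t, G.Adj v t ↔ t = a ∨ t = c ∨ t = d ∨ t = b := fun t => (hmem t).trans (by tauto)
  have pm_abdc : ∀ t, G.Adj v t ↔ t = a ∨ t = b ∨ t = d ∨ t = c := fun t => (hmem t).trans (by tauto)
  have pm_acbd : ∀ t, G.Adj v t ↔ t = a ∨ t = c ∨ t = b ∨ t = d := fun t => (hmem t).trans (by tauto)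
  have pm_adbc : ∀ t, G.Adj v t ↔ t = a ∨ t = d ∨ t = b ∨ t = c := fun t => (hmem t).trans (by tauto)
  have pm_dacb : ∀ t, G.Adj v t ↔ t = d ∨ t = a ∨ t = c ∨ t = b := fun t => (hmem t).trans (by tauto)
  have pm_badc : ∀ t, G.Adj v t ↔ t = b ∨ t = a ∨ t = d ∨ t = c := fun t => (hmem t).trans (by tauto)
  have pm_cadb : ∀ t, G.Adj v t ↔ t = c ∨ t = a ∨ t = d ∨ t = b := fun t => (hmem t).trans (by tauto)
  have pm_dbca : ∀ t, G.Adj v t ↔ t = d ∨ t = b ∨ t = c ∨ t = a := fun t => (hmem t).trans (by tauto)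
  have pm_cbda : ∀ t, G.Adj v t ↔ t = c ∨ t = b ∨ t = d ∨ t = a := fun t => (hmem t).trans (by tauto)
  have hva : G.Adj v a := (hmem a).mpr (by tauto)
  have hvb : G.Adj v b := (hmem b).mpr (by tauto)
  have hvc : G.Adj v c := (hmem c).mpr (by tauto)
  have hvd : G.Adj v d := (hmem d).mpr (by tauto)
  have nsymm : ∀ {p q : V}, ¬ G.Adj p q → ¬ G.Adj q p := fun hh h2 => hh h2.symm
  -- claw-freeness at v: every triple of neighbors contains an edge
  have t1 : G.Adj a b ∨ G.Adj a c ∨ G.Adj b c := by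
    by_contra hcon; push_neg at hcon
    exact noclaw hfree dab dac dbc hva hvb hvc hcon.1 hcon.2.1 hcon.2.2
  have t2 : G.Adj a b ∨ G.Adj a d ∨ G.Adj b d := by
    by_contra hcon; push_neg at hcon
    exact noclaw hfree dab dad dbd hva hvb hvd hcon.1 hcon.2.1 hcon.2.2
  have t3 : G.Adj a c ∨ G.Adj a d ∨ G.Adj c d := by
    by_contra hcon; push_neg at hcon
    exact noclaw hfree dac dad dcd hva hvc hvd hcon.1 hcon.2.1 hcon.2.2
  have t4 : G.Adj b c ∨ G.Adj b d ∨ G.Adj c d := by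
    by_contra hcon; push_neg at hcon
    exact noclaw hfree dbc dbd dcd hvb hvc hvd hcon.1 hcon.2.1 hcon.2.2
  -- no vertex of N(v) adjacent to all others (step2)
  have s1 : ¬(G.Adj a b ∧ G.Adj a c ∧ G.Adj a d) := fun ⟨h1, h2, h3⟩ =>
    step2 hF2 hmem dab dac dad dbc dbd dcd hdegN h1 h2 h3
  have s2 : ¬(G.Adj a b ∧ G.Adj b c ∧ G.Adj b d) := fun ⟨h1, h2, h3⟩ =>
    step2 hF2 pm_bacd dab.symm dbc dbd dac dad dcd hdegN
      h1.symm h2 h3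
  have s3 : ¬(G.Adj a c ∧ G.Adj b c ∧ G.Adj c d) := fun ⟨h1, h2, h3⟩ =>
    step2 hF2 pm_cabd dac.symm dbc.symm dcd dab dad dbd hdegN
      h1.symm h2.symm h3
  have s4 : ¬(G.Adj a d ∧ G.Adj b d ∧ G.Adj c d) := fun ⟨h1, h2, h3⟩ =>
    step2 hF2 pm_dabc dad.symm dbd.symm dcd.symm dab dac dbc hdegN
      h1.symm h2.symm h3.symm
  -- no isolated vertex in N(v) (step1)
  have i1 : G.Adj a b ∨ G.Adj a c ∨ G.Adj a d := by
    by_contra hcon; push_neg at hcon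
    exact step1 hF2 pm_bcda
      (nsymm hcon.1) (nsymm hcon.2.1) (nsymm hcon.2.2)
  have i2 : G.Adj a b ∨ G.Adj b c ∨ G.Adj b d := by
    by_contra hcon; push_neg at hcon
    exact step1 hF2 pm_acdb
      hcon.1 (nsymm hcon.2.1) (nsymm hcon.2.2)
  have i3 : G.Adj a c ∨ G.Adj b c ∨ G.Adj c d := by
    by_contra hcon; push_neg at hcon
    exact step1 hF2 pm_abdc
      hcon.1 hcon.2.1 (nsymm hcon.2.2)
  have i4 : G.Adj a d ∨ G.Adj b d ∨ G.Adj c d := by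
    by_contra hcon; push_neg at hcon
    exact step1 hF2 hmem hcon.1 hcon.2.1 hcon.2.2
  -- no induced C4 on N(v)
  have c1 : ¬(G.Adj a b ∧ G.Adj b c ∧ G.Adj c d ∧ G.Adj a d ∧ ¬G.Adj a c ∧ ¬G.Adj b d) :=
    fun ⟨h1, h2, h3, h4, h5, h6⟩ =>
      noC4 hfree hF2 hF3 hmem dab dac dad dbc dbd dcd hdegN h1 h2 h3 h4 h5 h6
  have c2 : ¬(G.Adj a b ∧ G.Adj b d ∧ G.Adj c d ∧ G.Adj a c ∧ ¬G.Adj a d ∧ ¬G.Adj b c) :=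
    fun ⟨h1, h2, h3, h4, h5, h6⟩ =>
      noC4 hfree hF2 hF3 pm_abdc
        dab dad dac dbd dbc dcd.symm hdegN h1 h2 h3.symm h4 h5 h6
  have c3 : ¬(G.Adj a c ∧ G.Adj b c ∧ G.Adj b d ∧ G.Adj a d ∧ ¬G.Adj a b ∧ ¬G.Adj c d) :=
    fun ⟨h1, h2, h3, h4, h5, h6⟩ =>
      noC4 hfree hF2 hF3 pm_acbd
        dac dab dad dbc.symm dcd dbd hdegN h1 h2.symm h3 h4 h5 h6
  have sd1 := (not_and_or.mp s1).imp_right not_and_or.mp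
  have sd2 := (not_and_or.mp s2).imp_right not_and_or.mp
  have sd3 := (not_and_or.mp s3).imp_right not_and_or.mp
  have sd4 := (not_and_or.mp s4).imp_right not_and_or.mp
  have cd1 := (not_and_or.mp c1).imp_right (fun hh => (not_and_or.mp hh).imp_right
    (fun hh => (not_and_or.mp hh).imp_right (fun hh => (not_and_or.mp hh).imp_right
    (fun hh => (not_and_or.mp hh).imp not_not.mp not_not.mp))))
  have cd2 := (not_and_or.mp c2).imp_right (fun hh => (not_and_or.mp hh).imp_right
    (fun hh => (not_and_or.mp hh).imp_right (fun hh => (not_and_or.mp hh).imp_right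
    (fun hh => (not_and_or.mp hh).imp not_not.mp not_not.mp))))
  have cd3 := (not_and_or.mp c3).imp_right (fun hh => (not_and_or.mp hh).imp_right
    (fun hh => (not_and_or.mp hh).imp_right (fun hh => (not_and_or.mp hh).imp_right
    (fun hh => (not_and_or.mp hh).imp not_not.mp not_not.mp))))
  have key := classifyB (decide (G.Adj a b)) (decide (G.Adj a c)) (decide (G.Adj a d))
    (decide (G.Adj b c)) (decide (G.Adj b d)) (decide (G.Adj c d)) (by
      simp only [Bool.and_eq_true, Bool.or_eq_true, Bool.not_eq_true', decide_eq_true_eq,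
        decide_eq_false_iff_not, and_assoc, or_assoc]
      exact ⟨t1, t2, t3, t4, sd1, sd2, sd3, sd4, i1, i2, i3, i4, cd1, cd2, cd3⟩)
  simp only [Bool.and_eq_true, Bool.or_eq_true, Bool.not_eq_true', decide_eq_true_eq,
    decide_eq_false_iff_not, and_assoc, or_assoc] at key
  rcases key with ⟨h1,h2,h3,h4,h5,h6⟩ | ⟨h1,h2,h3,h4,h5,h6⟩ | ⟨h1,h2,h3,h4,h5,h6⟩ |
    ⟨h1,h2,h3,h4,h5,h6⟩ | ⟨h1,h2,h3,h4,h5,h6⟩ | ⟨h1,h2,h3,h4,h5,h6⟩ | ⟨h1,h2,h3,h4,h5,h6⟩ |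
    ⟨h1,h2,h3,h4,h5,h6⟩ | ⟨h1,h2,h3,h4,h5,h6⟩ | ⟨h1,h2,h3,h4,h5,h6⟩ | ⟨h1,h2,h3,h4,h5,h6⟩ |
    ⟨h1,h2,h3,h4,h5,h6⟩ | ⟨h1,h2,h3,h4,h5,h6⟩ | ⟨h1,h2,h3,h4,h5,h6⟩ | ⟨h1,h2,h3,h4,h5,h6⟩
  · exact Or.inl (iso2K2 hmem dab dac dad dbc dbd dcd h1 h2 h3 h4 h5 h6)
  · exact Or.inl (iso2K2 pm_acbd
      dac dab dad dbc.symm dcd dbd h1 h2 h3 h4 (nsymm h5) h6)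
  · exact Or.inl (iso2K2 pm_adbc
      dad dab dac dbd.symm dcd.symm dbc h1 h2 h3 h4 (nsymm h5) (nsymm h6))
  · exact Or.inr (isoP4 pm_cabd
      dac.symm dbc.symm dcd dab dad dbd h1.symm h2 h3 (nsymm h4) h5 h6)
  · exact Or.inr (isoP4 pm_dabc
      dad.symm dbd.symm dcd.symm dab dac dbc h1.symm h2 h3 (nsymm h4) (nsymm h5) h6)
  · exact Or.inr (isoP4 pm_bacd
      dab.symm dbc dbd dac dad dcd h1.symm h2 h3 h4 h5 h6)
  · exact Or.inr (isoP4 pm_dacb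
      dad.symm dcd.symm dbd.symm dac dab dbc.symm h1.symm h2 h3.symm (nsymm h6) (nsymm h5) h4)
  · exact Or.inr (isoP4 pm_badc
      dab.symm dbd dbc dad dac dcd.symm h1.symm h2 h3.symm h6 h5 h4)
  · exact Or.inr (isoP4 pm_cadb
      dac.symm dcd dbc.symm dad dab dbd.symm h1.symm h2 h3.symm h6 (nsymm h5) h4)
  · exact Or.inr (isoP4 hmem dab dac dad dbc dbd dcd h1 h2 h3 h4 h5 h6)
  · exact Or.inr (isoP4 pm_dbca
      dbd.symm dcd.symm dad.symm dbc dab.symm dac.symm h1.symm h2 h3.symm (nsymm h6) (nsymm h5) (nsymm h4))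
  · exact Or.inr (isoP4 pm_abdc
      dab dad dac dbd dbc dcd.symm h1 h2 h3.symm h5 h4 h6)
  · exact Or.inr (isoP4 pm_cbda
      dbc.symm dcd dac.symm dbd dab.symm dad.symm h1.symm h2 h3.symm h6 (nsymm h5) (nsymm h4))
  · exact Or.inr (isoP4 pm_acdb
      dac dad dab dcd dbc.symm dbd.symm h1 h2 h3.symm h5 h4 (nsymm h6))
  · exact Or.inr (isoP4 pm_bcda
      dbc dbd dab.symm dcd dac.symm dad.symm h1 h2 h3.symm h6 (nsymm h4) (nsymm h5))
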